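/- Let n ≥ 2 and a < b. The set {(x₁, …, x_{n−1}, x₁² + ⋯ + x_{n−1}²) : (x₁, …, x_{n−1}) ∈ [a,b]^{n−1}} ⊆ ℝⁿ — the graph of the squared Euclidean norm over the cube [a,b]^{n−1}, which is contained in the paraboloid S(P) for P(x₁,…,xₙ) = x₁² + ⋯ + x_{n−1}² − xₙ — is a non-trivial self-affine set. -/

import Mathlib

open Set

/-- `f : ℝⁿ → ℝⁿ` is an invertible, strictly contractive affine map
(its linear part is bijective and has operator norm `< 1`). -/
def IsAffineContraction {n : ℕ}
    (f : EuclideanSpace ℝ (Fin n) → EuclideanSpace ℝ (Fin n)) : Prop :=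
  ∃ (T : EuclideanSpace ℝ (Fin n) →L[ℝ] EuclideanSpace ℝ (Fin n))
    (b : EuclideanSpace ℝ (Fin n)),
    Function.Bijective T ∧ ‖T‖ < 1 ∧ ∀ x, f x = T x + b

/-- `E ⊆ ℝⁿ` is self-affine: it is nonempty, compact and is the attractor of an
affine iterated function system. -/
def IsSelfAffine {n : ℕ} (E : Set (EuclideanSpace ℝ (Fin n))) : Prop :=
  E.Nonempty ∧ IsCompact E ∧
    ∃ (ℓ : ℕ) (f : Fin ℓ → (EuclideanSpace ℝ (Fin n) → EuclideanSpace ℝ (Fin n))),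
      (∀ i, IsAffineContraction (f i)) ∧ E = ⋃ i, f i '' E

section Aux

noncomputable def Tfun (m : ℕ) (ν : ℝ) (c : Fin m → ℝ)
    (y : EuclideanSpace ℝ (Fin (m+1))) : EuclideanSpace ℝ (Fin (m+1)) :=
  WithLp.toLp 2 (Fin.snoc (α := fun _ => ℝ) (fun i => y i.castSucc / ν)
    ((2/ν) * ∑ i : Fin m, c i * y i.castSucc + y (Fin.last m)/ν^2))

noncomputable def Sfun (m : ℕ) (ν : ℝ) (c : Fin m → ℝ)
    (z : EuclideanSpace ℝ (Fin (m+1))) : EuclideanSpace ℝ (Fin (m+1)) :=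
  WithLp.toLp 2 (Fin.snoc (α := fun _ => ℝ) (fun i => ν * z i.castSucc)
    (ν^2 * z (Fin.last m) - 2*ν^2 * ∑ i : Fin m, c i * z i.castSucc))

lemma Tfun_castSucc (m : ℕ) (ν : ℝ) (c : Fin m → ℝ) (y) (i : Fin m) :
    Tfun m ν c y i.castSucc = y i.castSucc / ν := by
  simp [Tfun]

lemma Tfun_last (m : ℕ) (ν : ℝ) (c : Fin m → ℝ) (y) :
    Tfun m ν c y (Fin.last m)
      = (2/ν) * ∑ i : Fin m, c i * y i.castSucc + y (Fin.last m)/ν^2 := by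
  simp [Tfun]

lemma Tfun_leftInv (m : ℕ) (ν : ℝ) (hν : ν ≠ 0) (c : Fin m → ℝ) :
    Function.LeftInverse (Sfun m ν c) (Tfun m ν c) := by
  intro y
  ext j
  induction j using Fin.lastCases with
  | last =>
    simp only [Sfun, PiLp.toLp_apply, Fin.snoc_last, Tfun_last, Tfun_castSucc]
    have : ∀ i : Fin m, c i * (y i.castSucc / ν) = (c i * y i.castSucc) / ν := fun i => by ring
    rw [Finset.sum_congr rfl fun i _ => this i, ← Finset.sum_div]
    field_simp
    ring
  | cast i =>
    simp only [Sfun, PiLp.toLp_apply, Fin.snoc_castSucc, Tfun_castSucc]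
    field_simp

lemma Tfun_rightInv (m : ℕ) (ν : ℝ) (hν : ν ≠ 0) (c : Fin m → ℝ) :
    Function.RightInverse (Sfun m ν c) (Tfun m ν c) := by
  intro z
  ext j
  induction j using Fin.lastCases with
  | last =>
    simp only [Tfun_last, Sfun, PiLp.toLp_apply, Fin.snoc_last, Fin.snoc_castSucc]
    have : ∀ i : Fin m, c i * (ν * z i.castSucc) = ν * (c i * z i.castSucc) := fun i => by ring
    rw [Finset.sum_congr rfl fun i _ => this i, ← Finset.mul_sum]
    field_simp
    ring
  | cast i =>
    simp only [Tfun_castSucc, Sfun, PiLp.toLp_apply, Fin.snoc_castSucc]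
    field_simp

noncomputable def Tlin (m : ℕ) (ν : ℝ) (c : Fin m → ℝ) :
    EuclideanSpace ℝ (Fin (m+1)) →ₗ[ℝ] EuclideanSpace ℝ (Fin (m+1)) where
  toFun := Tfun m ν c
  map_add' x y := by
    ext j
    induction j using Fin.lastCases with
    | last =>
      simp [Tfun, PiLp.add_apply, mul_add, Finset.mul_sum, Finset.sum_add_distrib]
      ring
    | cast i =>
      simp [Tfun, PiLp.add_apply]
      ring
  map_smul' r y := by
    ext j
    induction j using Fin.lastCases with
    | last =>
      simp [Tfun, PiLp.smul_apply, Finset.mul_sum, smul_eq_mul]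
      ring_nf
      rw [Finset.mul_sum]
      congr 1
      · exact Finset.sum_congr rfl fun i _ => by ring
    | cast i =>
      simp [Tfun, PiLp.smul_apply, smul_eq_mul]
      ring

lemma coord_le_norm {n : ℕ} (y : EuclideanSpace ℝ (Fin n)) (j : Fin n) : |y j| ≤ ‖y‖ := by
  rw [EuclideanSpace.norm_eq]
  have h1 : |y j| = Real.sqrt (|y j|^2) := by rw [Real.sqrt_sq_eq_abs, abs_abs]
  rw [h1]
  apply Real.sqrt_le_sqrt
  have := Finset.single_le_sum (f := fun i => ‖y i‖^2)
    (fun i _ => by positivity) (Finset.mem_univ j)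
  simpa [Real.norm_eq_abs] using this

lemma Tfun_norm_le (m : ℕ) (ν M : ℝ) (hν : 1 ≤ ν) (hM : 0 ≤ M)
    (c : Fin m → ℝ) (hc : ∀ i, |c i| ≤ M) (y : EuclideanSpace ℝ (Fin (m+1))) :
    ‖Tfun m ν c y‖ ≤ ((2 + 2*M*m)/ν) * ‖y‖ := by
  have hν0 : (0:ℝ) < ν := lt_of_lt_of_le one_pos hν
  set A : EuclideanSpace ℝ (Fin (m+1)) :=
    WithLp.toLp 2 (Fin.snoc (α := fun _ => ℝ) (fun i => y i.castSucc / ν) 0) with hA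
  set B : EuclideanSpace ℝ (Fin (m+1)) :=
    EuclideanSpace.single (Fin.last m)
      ((2/ν) * ∑ i : Fin m, c i * y i.castSucc + y (Fin.last m)/ν^2) with hB
  have hsum : Tfun m ν c y = A + B := by
    ext j
    induction j using Fin.lastCases with
    | last => simp [Tfun, hA, hB, PiLp.add_apply, EuclideanSpace.single_apply]
    | cast i =>
      simp [Tfun, hA, hB, PiLp.add_apply, EuclideanSpace.single_apply,
        (Fin.castSucc_lt_last i).ne]
  have hAle : ‖A‖ ≤ ‖y‖/ν := by
    have h2 : ‖y‖/ν = Real.sqrt ((‖y‖/ν)^2) := (Real.sqrt_sq (by positivity)).symm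
    rw [EuclideanSpace.norm_eq, h2]
    apply Real.sqrt_le_sqrt
    rw [Fin.sum_univ_castSucc]
    have hyn : (‖y‖/ν)^2 = (∑ j : Fin (m+1), ‖y j‖^2)/ν^2 := by
      rw [div_pow, EuclideanSpace.norm_eq, Real.sq_sqrt (by positivity)]
    rw [hyn, Fin.sum_univ_castSucc]
    simp only [hA, PiLp.toLp_apply, Fin.snoc_castSucc, Fin.snoc_last, norm_zero]
    have : ∀ i : Fin m, ‖y i.castSucc / ν‖^2 = ‖y i.castSucc‖^2 / ν^2 := fun i => by
      rw [norm_div]; simp [div_pow]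
    rw [Finset.sum_congr rfl fun i _ => this i, ← Finset.sum_div]
    rw [add_div]
    simp only [ne_eq, OfNat.ofNat_ne_zero, not_false_eq_true, zero_pow, add_zero]
    exact le_add_of_nonneg_right (by positivity)
  have hBle : ‖B‖ ≤ (2*M*m/ν) * ‖y‖ + ‖y‖/ν := by
    have hb : ‖B‖ = |(2/ν) * ∑ i : Fin m, c i * y i.castSucc + y (Fin.last m)/ν^2| := by
      rw [hB, EuclideanSpace.norm_single, Real.norm_eq_abs]
    rw [hb]
    have h1 : |∑ i : Fin m, c i * y i.castSucc| ≤ M * m * ‖y‖ := by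
      calc |∑ i : Fin m, c i * y i.castSucc| ≤ ∑ i : Fin m, |c i * y i.castSucc| :=
            Finset.abs_sum_le_sum_abs _ _
        _ ≤ ∑ _i : Fin m, M * ‖y‖ := by
            apply Finset.sum_le_sum
            intro i _
            rw [abs_mul]
            exact mul_le_mul (hc i) (coord_le_norm y _) (abs_nonneg _)
              hM
        _ = M * m * ‖y‖ := by simp [Finset.sum_const]; ring
    calc |(2/ν) * ∑ i : Fin m, c i * y i.castSucc + y (Fin.last m)/ν^2|
        ≤ |(2/ν) * ∑ i : Fin m, c i * y i.castSucc| + |y (Fin.last m)/ν^2| := abs_add_le _ _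
      _ ≤ (2/ν) * (M*m*‖y‖) + ‖y‖/ν^2 := by
          gcongr
          · rw [abs_mul, abs_of_nonneg (by positivity : (0:ℝ) ≤ 2/ν)]
            exact mul_le_mul_of_nonneg_left h1 (by positivity)
          · rw [abs_div, abs_of_nonneg (by positivity : (0:ℝ) ≤ ν^2)]
            gcongr; exact coord_le_norm y _
      _ ≤ (2*M*m/ν) * ‖y‖ + ‖y‖/ν := by
          have e1 : 2/ν*(M*(m:ℝ)*‖y‖) = 2*M*(m:ℝ)/ν*‖y‖ := by ring
          rw [e1]
          have h2 : ‖y‖/ν^2 ≤ ‖y‖/ν := by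
            gcongr
            nlinarith
          linarith
  calc ‖Tfun m ν c y‖ = ‖A + B‖ := by rw [hsum]
    _ ≤ ‖A‖ + ‖B‖ := norm_add_le _ _
    _ ≤ ‖y‖/ν + ((2*M*m/ν) * ‖y‖ + ‖y‖/ν) := add_le_add hAle hBle
    _ = ((2 + 2*M*m)/ν) * ‖y‖ := by field_simp; ring

lemma subint (N : ℕ) (hN : 1 ≤ N) (a b u : ℝ) (hab : a < b) (hu : u ∈ Icc a b) :
    ∃ k : Fin N, u ∈ Icc (a + k*((b-a)/N)) (a + ((k:ℝ)+1)*((b-a)/N)) := by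
  have hN0 : (0:ℝ) < N := by exact_mod_cast hN
  have hδ : 0 < (b-a)/N := div_pos (by linarith) hN0
  set δ := (b-a)/N with hδdef
  set t := (u - a)/δ with ht
  have ht0 : 0 ≤ t := div_nonneg (by linarith [hu.1]) hδ.le
  by_cases hcase : ⌊t⌋₊ < N
  · refine ⟨⟨⌊t⌋₊, hcase⟩, ?_, ?_⟩
    · have h1 : (⌊t⌋₊:ℝ) ≤ t := Nat.floor_le ht0
      rw [ht, le_div_iff₀ hδ] at h1
      show a + (⌊t⌋₊:ℝ) * δ ≤ u
      linarith
    · have h2 : t < ⌊t⌋₊ + 1 := Nat.lt_floor_add_one t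
      rw [ht, div_lt_iff₀ hδ] at h2
      show u ≤ a + ((⌊t⌋₊:ℝ)+1) * δ
      linarith
  · push_neg at hcase
    have hNt : (N:ℝ) ≤ t := (Nat.le_floor_iff ht0).mp hcase
    have hNδ : (N:ℝ) * δ = b - a := by rw [hδdef]; field_simp
    have hub : b ≤ u := by
      rw [ht, le_div_iff₀ hδ] at hNt
      nlinarith
    have hu2 : u = b := le_antisymm hu.2 hub
    have hc : ((N-1 : ℕ):ℝ) = (N:ℝ) - 1 := by rw [Nat.cast_sub hN]; simp
    refine ⟨⟨N-1, by omega⟩, ?_, ?_⟩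
    · show a + ((N-1:ℕ):ℝ) * δ ≤ u
      rw [hc, hu2]; nlinarith
    · show u ≤ a + (((N-1:ℕ):ℝ)+1) * δ
      rw [hc, hu2]; nlinarith

lemma pull (N : ℕ) (hN : 1 ≤ N) (a b u : ℝ) (k : Fin N)
    (h : u ∈ Icc (a + k*((b-a)/N)) (a + ((k:ℝ)+1)*((b-a)/N))) :
    (N:ℝ)*(u - (a - a/N + k*((b-a)/N))) ∈ Icc a b := by
  have hN0 : (0:ℝ) < N := by exact_mod_cast hN
  obtain ⟨h1, h2⟩ := h
  have hNδ : (N:ℝ) * ((b-a)/N) = b - a := by field_simp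
  have hNp : (N:ℝ) * (a/N) = a := by field_simp
  constructor
  · nlinarith [mul_le_mul_of_nonneg_left h1 hN0.le]
  · nlinarith [mul_le_mul_of_nonneg_left h2 hN0.le]

lemma push (N : ℕ) (hN : 1 ≤ N) (a b v : ℝ) (hab : a ≤ b) (k : Fin N)
    (h : v ∈ Icc a b) :
    (a - a/N + k*((b-a)/N)) + v/N ∈ Icc a b := by
  have hN0 : (0:ℝ) < N := by exact_mod_cast hN
  have hk : (k:ℝ) + 1 ≤ N := by exact_mod_cast k.2
  have hk0 : (0:ℝ) ≤ k := k.1.cast_nonneg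
  have hNδ : (N:ℝ) * ((b-a)/N) = b - a := by field_simp
  have hδ0 : 0 ≤ (b-a)/N := div_nonneg (by linarith) hN0.le
  have hbn : b/N = a/N + (b-a)/N := by ring
  obtain ⟨h1, h2⟩ := h
  constructor
  · have : a/N ≤ v/N := by gcongr
    nlinarith
  · have hv : v/N ≤ b/N := by gcongr
    have hkd : (k:ℝ)*((b-a)/N) ≤ ((N:ℝ)-1)*((b-a)/N) :=
      mul_le_mul_of_nonneg_right (by linarith) hδ0
    nlinarith

lemma cbound (N : ℕ) (hN : 1 ≤ N) (a b : ℝ) (hab : a ≤ b) (k : Fin N) :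
    |a - a/N + k*((b-a)/N)| ≤ |a| + (b-a) := by
  have hN0 : (0:ℝ) < N := by exact_mod_cast hN
  have hk : (k:ℝ) + 1 ≤ N := by exact_mod_cast k.2
  have hk0 : (0:ℝ) ≤ k := k.1.cast_nonneg
  have hδ0 : 0 ≤ (b-a)/N := div_nonneg (by linarith) hN0.le
  have h1 : |a - a/N| ≤ |a| := by
    have : a - a/N = a * (1 - 1/N) := by field_simp
    rw [this, abs_mul]
    have h01 : 0 ≤ 1 - 1/(N:ℝ) := by
      have : 1/(N:ℝ) ≤ 1 := by
        rw [div_le_one hN0]; exact_mod_cast hN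
      linarith
    have h11 : |1 - 1/(N:ℝ)| ≤ 1 := by
      rw [abs_of_nonneg h01]
      have : 0 ≤ 1/(N:ℝ) := by positivity
      linarith
    calc |a| * |1 - 1/(N:ℝ)| ≤ |a| * 1 := by gcongr
      _ = |a| := mul_one _
  have h2 : |(k:ℝ)*((b-a)/N)| ≤ b - a := by
    rw [abs_of_nonneg (mul_nonneg hk0 hδ0)]
    have hNδ : (N:ℝ) * ((b-a)/N) = b - a := by field_simp
    nlinarith
  calc |a - a/N + k*((b-a)/N)| ≤ |a - a/N| + |(k:ℝ)*((b-a)/N)| := abs_add_le _ _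
    _ ≤ |a| + (b-a) := add_le_add h1 h2

lemma sum_sq (m : ℕ) (c w : Fin m → ℝ) (ν : ℝ) (hν : ν ≠ 0) :
    ∑ i : Fin m, (c i + w i / ν)^2
      = ∑ i : Fin m, (c i)^2 + (2/ν) * (∑ i : Fin m, c i * w i)
        + (∑ i : Fin m, (w i)^2)/ν^2 := by
  have h : ∀ i : Fin m, (c i + w i / ν)^2
      = (c i)^2 + (2/ν) * (c i * w i) + (w i)^2/ν^2 := fun i => by
    field_simp
    ring
  rw [Finset.sum_congr rfl fun i _ => h i, Finset.sum_add_distrib,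
    Finset.sum_add_distrib, ← Finset.mul_sum, ← Finset.sum_div]

end Aux

section Aux2

noncomputable def cpar (N : ℕ) (a b : ℝ) {m : ℕ} (k : Fin m → Fin N) : Fin m → ℝ :=
  fun i => a - a/N + (k i : ℝ)*((b-a)/N)

noncomputable def bpar (N : ℕ) (a b : ℝ) {m : ℕ} (k : Fin m → Fin N) :
    EuclideanSpace ℝ (Fin (m+1)) :=
  WithLp.toLp 2 (Fin.snoc (α := fun _ => ℝ) (cpar N a b k) (∑ i : Fin m, (cpar N a b k i)^2))

noncomputable def Fmap (m N : ℕ) (a b : ℝ) (k : Fin m → Fin N)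
    (y : EuclideanSpace ℝ (Fin (m+1))) : EuclideanSpace ℝ (Fin (m+1)) :=
  Tfun m N (cpar N a b k) y + bpar N a b k

noncomputable def TCLM (m : ℕ) (ν : ℝ) (c : Fin m → ℝ) :
    EuclideanSpace ℝ (Fin (m+1)) →L[ℝ] EuclideanSpace ℝ (Fin (m+1)) :=
  LinearMap.toContinuousLinearMap (Tlin m ν c)

lemma TCLM_apply (m : ℕ) (ν : ℝ) (c : Fin m → ℝ) (y) :
    TCLM m ν c y = Tfun m ν c y := rfl

lemma Fmap_eq (m N : ℕ) (a b : ℝ) (k : Fin m → Fin N) (x) :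
    Fmap m N a b k x = TCLM m N (cpar N a b k) x + bpar N a b k := rfl

lemma Fmap_castSucc (m N : ℕ) (a b : ℝ) (k : Fin m → Fin N) (y) (i : Fin m) :
    Fmap m N a b k y i.castSucc = y i.castSucc / N + cpar N a b k i := by
  simp [Fmap, bpar, PiLp.add_apply, Tfun_castSucc, Fin.snoc_castSucc]

lemma Fmap_last (m N : ℕ) (a b : ℝ) (k : Fin m → Fin N) (y) :
    Fmap m N a b k y (Fin.last m)
      = ((2/N) * ∑ i : Fin m, cpar N a b k i * y i.castSucc + y (Fin.last m)/(N:ℝ)^2)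
        + ∑ i : Fin m, (cpar N a b k i)^2 := by
  simp [Fmap, bpar, PiLp.add_apply, Tfun_last, Fin.snoc_last]

lemma push' {m : ℕ} (N : ℕ) (hN : 1 ≤ N) (a b v : ℝ) (hab : a ≤ b)
    (k : Fin m → Fin N) (i : Fin m) (h : v ∈ Icc a b) :
    cpar N a b k i + v/N ∈ Icc a b :=
  push N hN a b v hab (k i) h

lemma pull' {m : ℕ} (N : ℕ) (hN : 1 ≤ N) (a b u : ℝ)
    (k : Fin m → Fin N) (i : Fin m)
    (h : u ∈ Icc (a + (k i)*((b-a)/N)) (a + (((k i):ℝ)+1)*((b-a)/N))) :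
    (N:ℝ)*(u - cpar N a b k i) ∈ Icc a b :=
  pull N hN a b u (k i) h

lemma cbound' {m : ℕ} (N : ℕ) (hN : 1 ≤ N) (a b : ℝ) (hab : a ≤ b)
    (k : Fin m → Fin N) (i : Fin m) :
    |cpar N a b k i| ≤ |a| + (b-a) :=
  cbound N hN a b hab (k i)

end Aux2

/-- Let `n = m + 1 ≥ 2` and `a < b`.  The graph of the squared
Euclidean norm over the cube `[a,b]ᵐ`, i.e. the set
`{(x₁, …, xₘ, x₁² + ⋯ + xₘ²) : (x₁, …, xₘ) ∈ [a,b]ᵐ} ⊆ ℝⁿ`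
(which is contained in the paraboloid `S(P)` for
`P (x₁,…,xₙ) = x₁² + ⋯ + x_{n-1}² − xₙ`), is a non-trivial self-affine set. -/
theorem paraboloid_graph_isSelfAffine
    (m : ℕ) (hm : 1 ≤ m) (a b : ℝ) (hab : a < b) :
    IsSelfAffine {y : EuclideanSpace ℝ (Fin (m + 1)) |
        (∀ i : Fin m, y i.castSucc ∈ Icc a b) ∧
        y (Fin.last m) = ∑ i : Fin m, (y i.castSucc) ^ 2} ∧
    Set.Nontrivial {y : EuclideanSpace ℝ (Fin (m + 1)) |
        (∀ i : Fin m, y i.castSucc ∈ Icc a b) ∧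
        y (Fin.last m) = ∑ i : Fin m, (y i.castSucc) ^ 2} := by
  set E := {y : EuclideanSpace ℝ (Fin (m + 1)) |
      (∀ i : Fin m, y i.castSucc ∈ Icc a b) ∧
      y (Fin.last m) = ∑ i : Fin m, (y i.castSucc) ^ 2} with hEdef
  set g : (Fin m → ℝ) → EuclideanSpace ℝ (Fin (m+1)) :=
    fun u => (WithLp.toLp 2 (Fin.snoc (α := fun _ => ℝ) u (∑ i : Fin m, u i ^ 2)) : EuclideanSpace ℝ (Fin (m+1))) with hg
  have hgmem : ∀ u : Fin m → ℝ, (∀ i, u i ∈ Icc a b) → g u ∈ E := by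
    intro u hu
    constructor
    · intro i
      simpa [hg, Fin.snoc_castSucc] using hu i
    · simp [hg, Fin.snoc_last, Fin.snoc_castSucc]
  set M : ℝ := |a| + (b - a) with hMdef
  have hM0 : 0 ≤ M := add_nonneg (abs_nonneg a) (by linarith)
  set N : ℕ := ⌊2 + 2*M*(m:ℝ)⌋₊ + 1 with hNdef
  have hN1 : 1 ≤ N := Nat.le_add_left 1 _
  have hN0' : (0:ℝ) < N := by exact_mod_cast hN1
  have hNne : (N:ℝ) ≠ 0 := ne_of_gt hN0'
  have hNR : (1:ℝ) ≤ N := by exact_mod_cast hN1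
  have hNbig : 2 + 2*M*(m:ℝ) < N := by
    have := Nat.lt_floor_add_one (2 + 2*M*(m:ℝ))
    rw [hNdef]
    push_cast
    linarith
  have hK1 : (2 + 2*M*(m:ℝ))/N < 1 := (div_lt_one hN0').mpr hNbig
  have hcM : ∀ (k : Fin m → Fin N) (i : Fin m), |cpar N a b k i| ≤ M :=
    fun k i => cbound' N hN1 a b hab.le k i
  -- invariance
  have hFmem : ∀ (k : Fin m → Fin N), ∀ y ∈ E, Fmap m N a b k y ∈ E := by
    intro k y hy
    obtain ⟨hy1, hy2⟩ := hy
    constructor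
    · intro i
      rw [Fmap_castSucc]
      have hp := push' N hN1 a b (y i.castSucc) hab.le k i (hy1 i)
      rwa [add_comm] at hp
    · rw [Fmap_last]
      have e1 : ∑ i : Fin m, (Fmap m N a b k y i.castSucc)^2
          = ∑ i : Fin m, (cpar N a b k i + y i.castSucc/(N:ℝ))^2 :=
        Finset.sum_congr rfl fun i _ => by rw [Fmap_castSucc]; ring
      rw [e1, sum_sq m (cpar N a b k) (fun i => y i.castSucc) N hNne, hy2]
      ring
  -- covering
  have hcover : ∀ y ∈ E, ∃ k : Fin m → Fin N, ∃ z ∈ E, Fmap m N a b k z = y := by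
    intro y hy
    obtain ⟨hy1, hy2⟩ := hy
    choose k hk using fun i : Fin m => subint N hN1 a b (y i.castSucc) hab (hy1 i)
    set v : Fin m → ℝ := fun i => (N:ℝ)*(y i.castSucc - cpar N a b k i) with hv
    have hvI : ∀ i, v i ∈ Icc a b := fun i => pull' N hN1 a b (y i.castSucc) k i (hk i)
    have hgv_cast : ∀ i : Fin m, (g v) i.castSucc = v i := by
      intro i; simp [hg, Fin.snoc_castSucc]
    have hgv_last : (g v) (Fin.last m) = ∑ i : Fin m, (v i)^2 := by
      simp [hg, Fin.snoc_last]
    have hcv : ∀ i, cpar N a b k i + v i / N = y i.castSucc := by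
      intro i
      show cpar N a b k i + ((N:ℝ)*(y i.castSucc - cpar N a b k i)) / N = y i.castSucc
      field_simp
      ring
    refine ⟨k, g v, hgmem v hvI, ?_⟩
    ext j
    induction j using Fin.lastCases with
    | last =>
      rw [Fmap_last, hgv_last]
      have e2 : ∑ i : Fin m, cpar N a b k i * (g v) i.castSucc
          = ∑ i : Fin m, cpar N a b k i * v i :=
        Finset.sum_congr rfl fun i _ => by rw [hgv_cast]
      rw [e2, hy2]
      have e3 : ∑ i : Fin m, (y i.castSucc)^2
          = ∑ i : Fin m, (cpar N a b k i + v i / N)^2 :=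
        Finset.sum_congr rfl fun i _ => by rw [hcv i]
      rw [e3, sum_sq m (cpar N a b k) v N hNne]
      ring
    | cast i =>
      rw [Fmap_castSucc, hgv_cast, ← hcv i]
      ring
  -- union identity
  have hUnion : E = ⋃ k : Fin m → Fin N, Fmap m N a b k '' E := by
    ext y
    simp only [mem_iUnion, mem_image]
    constructor
    · intro hy
      obtain ⟨k, z, hz, hzy⟩ := hcover y hy
      exact ⟨k, z, hz, hzy⟩
    · rintro ⟨k, z, hz, rfl⟩
      exact hFmem k z hz
  -- contractions
  have hcontr : ∀ k : Fin m → Fin N, IsAffineContraction (Fmap m N a b k) := by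
    intro k
    refine ⟨TCLM m N (cpar N a b k), bpar N a b k, ?_, ?_, Fmap_eq m N a b k⟩
    · have hco : ⇑(TCLM m (N:ℝ) (cpar N a b k)) = Tfun m N (cpar N a b k) := rfl
      rw [hco]
      exact Function.bijective_iff_has_inverse.mpr
        ⟨Sfun m N (cpar N a b k), Tfun_leftInv m N hNne (cpar N a b k),
          Tfun_rightInv m N hNne (cpar N a b k)⟩
    · refine lt_of_le_of_lt (ContinuousLinearMap.opNorm_le_bound _ (by positivity) ?_) hK1
      intro y
      rw [TCLM_apply]
      exact Tfun_norm_le m N M hNR hM0 (cpar N a b k) (hcM k) y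
  -- compactness
  have hgcont : Continuous g := by
    have h0 : Continuous (fun u : Fin m → ℝ =>
        (Fin.snoc u (∑ i : Fin m, u i ^ 2) : Fin (m+1) → ℝ)) := by
      apply continuous_pi
      intro j
      induction j using Fin.lastCases with
      | last =>
        simp only [Fin.snoc_last]
        fun_prop
      | cast i =>
        simp only [Fin.snoc_castSucc]
        exact continuous_apply i
    exact (EuclideanSpace.equiv (Fin (m+1)) ℝ).symm.continuous.comp h0
  have hEg : E = g '' (univ.pi fun _ : Fin m => Icc a b) := by
    ext y
    constructor
    · rintro ⟨h1, h2⟩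
      refine ⟨fun i => y i.castSucc, fun i _ => h1 i, ?_⟩
      ext j
      induction j using Fin.lastCases with
      | last => simp [hg, Fin.snoc_last, h2]
      | cast i => simp [hg, Fin.snoc_castSucc]
    · rintro ⟨u, hu, rfl⟩
      exact hgmem u fun i => hu i (mem_univ i)
  have hcompact : IsCompact E := by
    rw [hEg]
    exact (isCompact_univ_pi fun _ => isCompact_Icc).image hgcont
  constructor
  · refine ⟨⟨g (fun _ => a), hgmem _ fun i => left_mem_Icc.mpr hab.le⟩, hcompact,
      N ^ m, fun p => Fmap m N a b (finFunctionFinEquiv.symm p),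
      fun p => hcontr _, ?_⟩
    have hre : (⋃ p : Fin (N^m), Fmap m N a b (finFunctionFinEquiv.symm p) '' E)
        = ⋃ k : Fin m → Fin N, Fmap m N a b k '' E := by
      apply le_antisymm
      · exact iUnion_subset fun p =>
          subset_iUnion (fun k : Fin m → Fin N => Fmap m N a b k '' E) _
      · refine iUnion_subset fun k => ?_
        have he : Fmap m N a b k '' E
            = Fmap m N a b (finFunctionFinEquiv.symm (finFunctionFinEquiv k)) '' E := by
          rw [Equiv.symm_apply_apply]
        rw [he]
        exact subset_iUnion
          (fun p : Fin (N^m) => Fmap m N a b (finFunctionFinEquiv.symm p) '' E)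
          (finFunctionFinEquiv k)
    rw [hre]
    exact hUnion
  · refine ⟨g (fun _ => a), hgmem _ fun i => left_mem_Icc.mpr hab.le,
      g (fun _ => b), hgmem _ fun i => right_mem_Icc.mpr hab.le, ?_⟩
    intro h
    have h0 : (0:ℕ) < m := hm
    have := congrArg (fun y : EuclideanSpace ℝ (Fin (m+1)) =>
      y ((⟨0, h0⟩ : Fin m).castSucc)) h
    simp only [hg, PiLp.toLp_apply, Fin.snoc_castSucc] at this
    exact hab.ne this
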